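/- The standard control vector field equals the contraction of the tensor T with g; explicitly, v₀ = Σ_{i,j=1}^k (−1)^{i+j+1} M_{ij} ⟪g, f_i⟫ · f_j + (det Γ_f) · g. -/
import Mathlib


open scoped RealInnerProductSpace

/-- The matrix `Σ^{(a₁,…,a_r)}_{(b₁,…,b_s)}` whose `(p,q)` entry is `⟪b_q, a_p⟫`. -/
noncomputable def sigmaMat {V : Type*} [NormedAddCommGroup V] [InnerProductSpace ℝ V]
    {r s : ℕ} (a : Fin r → V) (b : Fin s → V) : Matrix (Fin r) (Fin s) ℝ :=
  Matrix.of fun p q => ⟪b q, a p⟫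

/-- The standard control vector field built from the `k+1` vectors `f₀,…,f_k`
and the vector `g`. -/
noncomputable def v0 {V : Type*} [NormedAddCommGroup V] [InnerProductSpace ℝ V]
    {k : ℕ} (f : Fin (k+1) → V) (g : V) : V :=
  (∑ i : Fin (k+1),
    ((-1 : ℝ) ^ ((i : ℕ) + k + 1) *
      (sigmaMat f (Fin.snoc (fun j => f (i.succAbove j)) g)).det) • f i)
  + (sigmaMat f f).det • g

/-- `M_{ij}`: the determinant of the matrix obtained from the Gram matrix of `f`
by deleting the `i`-th row and the `j`-th column. -/
noncomputable def gramMinor {V : Type*} [NormedAddCommGroup V] [InnerProductSpace ℝ V]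
    {k : ℕ} (f : Fin (k+1) → V) (i j : Fin (k+1)) : ℝ :=
  ((sigmaMat f f).submatrix i.succAbove j.succAbove).det

lemma key_det {V : Type*} [NormedAddCommGroup V] [InnerProductSpace ℝ V]
    {k : ℕ} (f : Fin (k+1) → V) (g : V) (i : Fin (k+1)) :
    (sigmaMat f (Fin.snoc (fun j => f (i.succAbove j)) g)).det =
      ∑ p : Fin (k+1), (-1 : ℝ) ^ ((p : ℕ) + k) * ⟪g, f p⟫ * gramMinor f p i := by
  rw [Matrix.det_succ_column _ (Fin.last k)]
  refine Finset.sum_congr rfl fun p _ => ?_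
  have h1 : sigmaMat f (Fin.snoc (fun j => f (i.succAbove j)) g) p (Fin.last k)
      = ⟪g, f p⟫ := by simp [sigmaMat]
  have h2 : (sigmaMat f (Fin.snoc (fun j => f (i.succAbove j)) g)).submatrix
      p.succAbove (Fin.last k).succAbove = (sigmaMat f f).submatrix p.succAbove i.succAbove := by
    ext a b
    simp [sigmaMat, Fin.succAbove_last, Matrix.submatrix]
  rw [h1, h2, Fin.val_last]
  rfl

theorem stmt_7 {V : Type*} [NormedAddCommGroup V] [InnerProductSpace ℝ V]
    [FiniteDimensional ℝ V] (k : ℕ) (f : Fin (k+1) → V) (g : V) :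
    v0 f g =
      (∑ i : Fin (k+1), ∑ j : Fin (k+1),
        ((-1 : ℝ) ^ ((i : ℕ) + (j : ℕ) + 1) * gramMinor f i j * ⟪g, f i⟫) • f j)
      + (sigmaMat f f).det • g := by
  unfold v0
  congr 1
  rw [Finset.sum_comm]
  refine Finset.sum_congr rfl fun i _ => ?_
  rw [key_det, Finset.mul_sum, Finset.sum_smul]
  refine Finset.sum_congr rfl fun p _ => ?_
  congr 1
  have hsign : (-1 : ℝ) ^ ((i : ℕ) + k + 1) * (-1 : ℝ) ^ ((p : ℕ) + k)
      = (-1 : ℝ) ^ ((p : ℕ) + (i : ℕ) + 1) := by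
    rw [← pow_add, show (i : ℕ) + k + 1 + ((p : ℕ) + k) = (p : ℕ) + (i : ℕ) + 1 + 2 * k by ring,
      pow_add, pow_mul]
    norm_num
  calc (-1 : ℝ) ^ ((i : ℕ) + k + 1) * ((-1 : ℝ) ^ ((p : ℕ) + k) * ⟪g, f p⟫ * gramMinor f p i)
      = ((-1 : ℝ) ^ ((i : ℕ) + k + 1) * (-1 : ℝ) ^ ((p : ℕ) + k)) * gramMinor f p i * ⟪g, f p⟫ := by ring
    _ = (-1 : ℝ) ^ ((p : ℕ) + (i : ℕ) + 1) * gramMinor f p i * ⟪g, f p⟫ := by rw [hsign]
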